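/- For every integer n ≥ 1, the following identity holds in ℤ[p,q]: the sum over all Stirling permutations σ of order n of p^{odd(σ)} q^{even(σ)} equals Σ_{k=0}^{n} c(n,k) p^k (p+q)^{n−k}, where c(n,k) is the signless Stirling number of the first kind. -/

import Mathlib

open Finset

section Defs

variable {m : ℕ} {α : Type*}

def lrminFilter [LinearOrder α] (f : Fin m → α) : Finset (Fin m) :=
  univ.filter fun i => ∀ j, j < i → f i < f j

def lrminCount [LinearOrder α] (f : Fin m → α) : ℕ :=
  (lrminFilter f).card

def lrminSet [LinearOrder α] [DecidableEq α] (f : Fin m → α) : Finset α :=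
  (lrminFilter f).image f

def ascFilter [LinearOrder α] (f : Fin m → α) : Finset (Fin m) :=
  univ.filter fun i => ∃ j : Fin m, (j : ℕ) + 1 = (i : ℕ) ∧ f j < f i

def ascCount [LinearOrder α] (f : Fin m → α) : ℕ :=
  (ascFilter f).card

def ascSet [LinearOrder α] [DecidableEq α] (f : Fin m → α) : Finset α :=
  (ascFilter f).image f

def apFilter [LinearOrder α] (f : Fin m → α) : Finset (Fin m) :=
  univ.filter fun i =>
    ∃ j k : Fin m, (j : ℕ) + 1 = (i : ℕ) ∧ (i : ℕ) + 1 = (k : ℕ) ∧ f j < f i ∧ f i = f k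

def apCount [LinearOrder α] (f : Fin m → α) : ℕ := (apFilter f).card

def apSet [LinearOrder α] [DecidableEq α] (f : Fin m → α) : Finset α := (apFilter f).image f

def evenFilter [DecidableEq α] (f : Fin m → α) : Finset (Fin m) :=
  univ.filter fun p => (p : ℕ) % 2 = 1 ∧ ∀ q, q < p → f q ≠ f p

def evenCount [DecidableEq α] (f : Fin m → α) : ℕ := (evenFilter f).card

def evenSet [DecidableEq α] (f : Fin m → α) : Finset α := (evenFilter f).image f

def desrlminCount [LinearOrder α] (f : Fin m → α) : ℕ :=
  (univ.filter fun i : Fin m =>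
    (∃ j : Fin m, (j : ℕ) + 1 = (i : ℕ) ∧ f i < f j) ∨ ∀ j, i < j → f i < f j).card

def isLRminPos [LinearOrder α] (f : Fin m → α) (i : Fin m) : Prop :=
  ∀ j, j < i → f i < f j

instance [LinearOrder α] (f : Fin m → α) : DecidablePred (isLRminPos f) := fun i => by
  unfold isLRminPos; infer_instance

def bk2Count [LinearOrder α] (f : Fin m → α) : ℕ :=
  (univ.filter fun i : Fin m =>
    isLRminPos f i ∧ (i : ℕ) + 1 < m ∧
      (∀ j : Fin m, (j : ℕ) = (i : ℕ) + 1 → ¬ isLRminPos f j) ∧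
      (∀ j : Fin m, (j : ℕ) = (i : ℕ) + 2 → isLRminPos f j)).card

end Defs

def IsStirling (n : ℕ) (f : Fin (2 * n) → Fin n) : Prop :=
  (∀ k : Fin n, (univ.filter fun p => f p = k).card = 2) ∧
    ∀ p q r : Fin (2 * n), p < q → q < r → f p = f r → f p < f q

instance (n : ℕ) : DecidablePred (IsStirling n) := fun f => by
  unfold IsStirling; infer_instance

def stirlingFinset (n : ℕ) : Finset (Fin (2 * n) → Fin n) :=
  univ.filter (IsStirling n)

def markedPerms (n : ℕ) : Finset (Equiv.Perm (Fin n) × Finset (Fin n)) :=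
  univ.filter fun pm => ∀ v ∈ pm.2, v ∉ lrminSet (⇑pm.1)

/-- The number of cycles of a permutation, fixed points counting as cycles. -/
def cycCount {n : ℕ} (π : Equiv.Perm (Fin n)) : ℕ :=
  Multiset.card π.cycleType + (univ.filter fun i => π i = i).card

/-- The signless Stirling number of the first kind: the number of permutations of
{1,…,n} with exactly k cycles. -/
def stirlingFirst (n k : ℕ) : ℕ :=
  (univ.filter fun π : Equiv.Perm (Fin n) => cycCount π = k).card


section Aux
open Equiv

lemma cycCount_eq {n : ℕ} (π : Equiv.Perm (Fin n)) :
    cycCount π = Multiset.card π.cycleType + (n - π.support.card) := by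
  have : (univ.filter fun i => π i = i) = π.supportᶜ := by
    ext i; simp [Equiv.Perm.notMem_support]
  rw [cycCount, this, Finset.card_compl, Fintype.card_fin]

lemma support_card_le {n : ℕ} (π : Equiv.Perm (Fin n)) : π.support.card ≤ n := by
  simpa using Finset.card_le_univ π.support

lemma cycCount_swap_mul {n : ℕ} (σ : Equiv.Perm (Fin n)) (x : Fin n) (h : σ x ≠ x) :
    cycCount (Equiv.swap x (σ x) * σ) = cycCount σ + 1 := by
  classical
  set c := σ.cycleOf x with hc_def
  have hxsupp : x ∈ σ.support := Equiv.Perm.mem_support.2 h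
  have hc : c ∈ σ.cycleFactorsFinset := Equiv.Perm.cycleOf_mem_cycleFactorsFinset_iff.mpr hxsupp
  have hcx : c x = σ x := Equiv.Perm.cycleOf_apply_self σ x
  have hccx : c (σ x) = σ (σ x) := by
    rw [hc_def, Equiv.Perm.cycleOf_apply]
    simp [Equiv.Perm.SameCycle.refl, (Equiv.Perm.sameCycle_apply_right (f := σ)).2 (Equiv.Perm.SameCycle.refl σ x)]
  have hcyc : c.IsCycle := Equiv.Perm.isCycle_cycleOf σ h
  set d := σ * c⁻¹ with hd_def
  have hdc : Equiv.Perm.Disjoint d c := Equiv.Perm.disjoint_mul_inv_of_mem_cycleFactorsFinset hc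
  have hσdc : σ = d * c := by rw [hd_def]; group
  -- x and σ x are in support of c, hence not in support of d
  have hxc : x ∈ c.support := by rw [Equiv.Perm.mem_support, hcx]; exact h
  have hσσx : σ (σ x) ≠ σ x := fun hh => h (σ.injective hh)
  have hsxc : σ x ∈ c.support := by rw [Equiv.Perm.mem_support, hccx]; exact hσσx
  have hsupp_disj : _root_.Disjoint d.support c.support := hdc.disjoint_support
  have hxd : d x = x := Equiv.Perm.notMem_support.1 (Finset.disjoint_right.1 hsupp_disj hxc)
  have hsxd : d (σ x) = σ x := Equiv.Perm.notMem_support.1 (Finset.disjoint_right.1 hsupp_disj hsxc)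
  have hswapd : Equiv.Perm.Disjoint (Equiv.swap x (σ x)) d := by
    intro z
    by_cases hz : z = x
    · subst hz; right; exact hxd
    by_cases hz2 : z = σ x
    · subst hz2; right; exact hsxd
    · left; exact Equiv.swap_apply_of_ne_of_ne hz hz2
  have hτ : Equiv.swap x (σ x) * σ = d * (Equiv.swap x (σ x) * c) := by
    have h1 : Equiv.swap x (σ x) * (d * c) = d * (Equiv.swap x (σ x) * c) := by
      rw [← mul_assoc, (hswapd.commute).eq, mul_assoc]
    rw [← h1, ← hσdc]
  by_cases h2 : σ (σ x) = x
  · -- the cycle of x is a 2-cycle: c = swap x (σ x)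
    have hc2 : c = Equiv.swap x (σ x) := by
      have := hcyc.eq_swap_of_apply_apply_eq_self (by rw [hcx]; exact h) (by rw [hcx, hccx]; exact h2)
      rwa [hcx] at this
    have hτd : Equiv.swap x (σ x) * σ = d := by
      rw [hτ, ← hc2]; simp [hc2]
    have hcyctype : σ.cycleType = d.cycleType + {2} := by
      rw [hσdc, hdc.cycleType_mul, hcyc.cycleType, hc2, Equiv.Perm.support_swap (Ne.symm h)]
      simp [Finset.card_insert_of_notMem, Ne.symm h]
    have hsupp : σ.support.card = d.support.card + 2 := by
      rw [hσdc, hdc.support_mul, Finset.card_union_of_disjoint hsupp_disj, hc2,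
        Equiv.Perm.support_swap (Ne.symm h)]
      simp [Finset.card_insert_of_notMem, Ne.symm h]
    have hle := support_card_le σ
    rw [hτd, cycCount_eq, cycCount_eq, hcyctype]
    simp only [Multiset.card_add, Multiset.card_singleton]
    omega
  · -- cycle of length ≥ 3
    have hccx2 : c (c x) ≠ x := by rw [hcx, hccx]; exact h2
    set c' := Equiv.swap x (c x) * c with hc'_def
    have hc'cyc : c'.IsCycle := hcyc.swap_mul (by rw [hcx]; exact h) hccx2
    have hc'supp : c'.support = c.support \ {x} := Equiv.Perm.support_swap_mul_eq c x hccx2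
    have hc'card : c'.support.card = c.support.card - 1 := by
      rw [hc'supp, Finset.card_sdiff_of_subset (by simpa using hxc)]
      simp
    have hdisj' : Equiv.Perm.Disjoint d c' := by
      intro z
      by_cases hz : c' z = z
      · right; exact hz
      · left
        have : z ∈ c'.support := Equiv.Perm.mem_support.2 hz
        rw [hc'supp] at this
        exact Equiv.Perm.notMem_support.1
          (Finset.disjoint_right.1 hsupp_disj (Finset.mem_sdiff.1 this).1)
    have hτ' : Equiv.swap x (σ x) * σ = d * c' := by rw [hτ, hc'_def, hcx]
    have hct : (Equiv.swap x (σ x) * σ).cycleType = d.cycleType + {c'.support.card} := by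
      rw [hτ', hdisj'.cycleType_mul, hc'cyc.cycleType]
    have hctσ : σ.cycleType = d.cycleType + {c.support.card} := by
      rw [hσdc, hdc.cycleType_mul, hcyc.cycleType]
    have hsuppτ : (Equiv.swap x (σ x) * σ).support.card = d.support.card + (c.support.card - 1) := by
      rw [hτ', hdisj'.support_mul, Finset.card_union_of_disjoint, hc'card]
      exact Finset.disjoint_of_subset_right (by rw [hc'supp]; exact Finset.sdiff_subset) hsupp_disj
    have hsuppσ : σ.support.card = d.support.card + c.support.card := by
      rw [hσdc, hdc.support_mul, Finset.card_union_of_disjoint hsupp_disj]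
    have hle := support_card_le σ
    have hcpos : 1 ≤ c.support.card := Finset.card_pos.2 ⟨x, hxc⟩
    rw [cycCount_eq, cycCount_eq, hct, hctσ]
    simp only [Multiset.card_add, Multiset.card_singleton]
    omega

def finSuccEquivNeZero (n : ℕ) : Fin n ≃ {x : Fin (n+1) // x ≠ 0} where
  toFun i := ⟨i.succ, Fin.succ_ne_zero i⟩
  invFun x := x.1.pred x.2
  left_inv i := by simp
  right_inv x := by simp

lemma cycCount_decomposeZero {n : ℕ} (e : Equiv.Perm (Fin n)) :
    cycCount (Equiv.Perm.decomposeFin.symm (0, e)) = cycCount e + 1 := by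
  classical
  have hext : Equiv.Perm.decomposeFin.symm (0, e) = e.extendDomain (finSuccEquivNeZero n) := by
    apply Equiv.ext; intro z
    induction z using Fin.cases with
    | zero =>
      rw [Equiv.Perm.decomposeFin_symm_apply_zero,
        e.extendDomain_apply_not_subtype (finSuccEquivNeZero n) (by simp)]
    | succ x =>
      rw [Equiv.Perm.decomposeFin_symm_apply_succ,
        e.extendDomain_apply_subtype (finSuccEquivNeZero n) (Fin.succ_ne_zero x)]
      simp [finSuccEquivNeZero]
  rw [hext, cycCount_eq, cycCount_eq, Equiv.Perm.cycleType_extendDomain,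
    Equiv.Perm.card_support_extend_domain]
  have := support_card_le e
  omega

lemma cycCount_decompose {n : ℕ} (p : Fin (n+1)) (e : Equiv.Perm (Fin n)) :
    cycCount (Equiv.Perm.decomposeFin.symm (p, e))
      = cycCount e + (if p = 0 then 1 else 0) := by
  by_cases hp : p = 0
  · rw [hp, if_pos rfl, cycCount_decomposeZero]
  · rw [if_neg hp]
    set σ := Equiv.Perm.decomposeFin.symm (p, e) with hσ
    have hswap : Equiv.swap 0 p * σ = Equiv.Perm.decomposeFin.symm (0, e) := by
      ext z
      induction z using Fin.cases with
      | zero => simp [hσ]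
      | succ x => simp [hσ]
    have hσ0 : σ 0 = p := by simp [hσ]
    have h0 : σ 0 ≠ 0 := by rw [hσ0]; exact hp
    have key := cycCount_swap_mul σ 0 h0
    rw [hσ0, hswap, cycCount_decomposeZero] at key
    omega

lemma cycCount_le {n : ℕ} (π : Equiv.Perm (Fin n)) : cycCount π ≤ n := by
  have h1 : Multiset.card π.cycleType ≤ π.cycleType.sum := by
    simpa using Multiset.card_nsmul_le_sum (fun x hx => Equiv.Perm.one_lt_of_mem_cycleType hx |>.le)
  rw [cycCount_eq]
  have h2 := π.sum_cycleType
  have h3 := support_card_le π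
  omega

noncomputable def Spoly (n : ℕ) : MvPolynomial (Fin 2) ℤ :=
  ∑ π : Equiv.Perm (Fin n),
    MvPolynomial.X 0 ^ cycCount π * (MvPolynomial.X 0 + MvPolynomial.X 1) ^ (n - cycCount π)

lemma Spoly_zero : Spoly 0 = 1 := by
  rw [Spoly]
  rw [Finset.sum_eq_single_of_mem 1 (Finset.mem_univ _)]
  · have : cycCount (1 : Equiv.Perm (Fin 0)) = 0 := by
      rw [cycCount_eq, Equiv.Perm.cycleType_one]; simp
    simp [this]
  · intro b _ hb
    exact absurd (Subsingleton.elim b 1) hb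

lemma Spoly_succ (n : ℕ) :
    Spoly (n + 1)
      = (MvPolynomial.X 0 + (n : MvPolynomial (Fin 2) ℤ)
          * (MvPolynomial.X 0 + MvPolynomial.X 1)) * Spoly n := by
  classical
  rw [Spoly, Finset.univ_perm_fin_succ, Finset.sum_map]
  rw [show ∀ f : Fin (n+1) × Equiv.Perm (Fin n) → MvPolynomial (Fin 2) ℤ,
      ∑ x : Fin (n+1) × Equiv.Perm (Fin n), f x = ∑ p : Fin (n+1), ∑ e : Equiv.Perm (Fin n), f (p, e)
    from fun f => Fintype.sum_prod_type f]
  have key : ∀ (p : Fin (n+1)) (e : Equiv.Perm (Fin n)),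
      (MvPolynomial.X 0 : MvPolynomial (Fin 2) ℤ)
          ^ cycCount (Equiv.Perm.decomposeFin.symm (p, e))
        * (MvPolynomial.X 0 + MvPolynomial.X 1)
          ^ (n + 1 - cycCount (Equiv.Perm.decomposeFin.symm (p, e)))
      = (if p = 0 then MvPolynomial.X 0 else MvPolynomial.X 0 + MvPolynomial.X 1)
        * (MvPolynomial.X 0 ^ cycCount e
            * (MvPolynomial.X 0 + MvPolynomial.X 1) ^ (n - cycCount e)) := by
    intro p e
    have hle := cycCount_le e
    rw [cycCount_decompose]
    by_cases hp : p = 0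
    · rw [if_pos hp, if_pos hp]
      have : n + 1 - (cycCount e + 1) = n - cycCount e := by omega
      rw [this, pow_succ]
      ring
    · rw [if_neg hp, if_neg hp]
      have : n + 1 - (cycCount e + 0) = (n - cycCount e) + 1 := by omega
      rw [this, pow_succ]
      ring
  calc ∑ p : Fin (n+1), ∑ e : Equiv.Perm (Fin n),
        (MvPolynomial.X 0 : MvPolynomial (Fin 2) ℤ)
            ^ cycCount (Equiv.Perm.decomposeFin.symm.toEmbedding (p, e))
          * (MvPolynomial.X 0 + MvPolynomial.X 1)
            ^ (n + 1 - cycCount (Equiv.Perm.decomposeFin.symm.toEmbedding (p, e)))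
      = ∑ p : Fin (n+1), (if p = 0 then (MvPolynomial.X 0 : MvPolynomial (Fin 2) ℤ)
            else MvPolynomial.X 0 + MvPolynomial.X 1) * Spoly n := by
        refine Finset.sum_congr rfl fun p _ => ?_
        rw [Spoly, Finset.mul_sum]
        refine Finset.sum_congr rfl fun e _ => ?_
        simpa using key p e
    _ = (MvPolynomial.X 0 + (n : MvPolynomial (Fin 2) ℤ)
          * (MvPolynomial.X 0 + MvPolynomial.X 1)) * Spoly n := by
        rw [← Finset.sum_mul]
        congr 1
        rw [Fin.sum_univ_succ]
        simp [Fin.succ_ne_zero, mul_add]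

lemma Spoly_eq_prod (n : ℕ) :
    Spoly n = ∏ j ∈ Finset.range n,
      (MvPolynomial.X 0 + (j : MvPolynomial (Fin 2) ℤ)
        * (MvPolynomial.X 0 + MvPolynomial.X 1)) := by
  induction n with
  | zero => simp [Spoly_zero]
  | succ m ih => rw [Spoly_succ, ih, Finset.prod_range_succ]; ring

lemma rhs_eq_Spoly (n : ℕ) :
    ∑ k ∈ Finset.range (n + 1),
        (stirlingFirst n k : MvPolynomial (Fin 2) ℤ) * MvPolynomial.X 0 ^ k *
          (MvPolynomial.X 0 + MvPolynomial.X 1) ^ (n - k)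
      = Spoly n := by
  classical
  rw [Spoly, ← Finset.sum_fiberwise_of_maps_to
    (g := cycCount) (t := Finset.range (n+1))
    (fun π _ => Finset.mem_range.2 (Nat.lt_succ_of_le (cycCount_le π)))]
  refine Finset.sum_congr rfl fun k _ => ?_
  have h1 : ∀ π ∈ univ.filter (fun π : Equiv.Perm (Fin n) => cycCount π = k),
      (MvPolynomial.X 0 : MvPolynomial (Fin 2) ℤ) ^ cycCount π
          * (MvPolynomial.X 0 + MvPolynomial.X 1) ^ (n - cycCount π)
        = (MvPolynomial.X 0 : MvPolynomial (Fin 2) ℤ) ^ k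
          * (MvPolynomial.X 0 + MvPolynomial.X 1) ^ (n - k) := fun π hπ => by
    rw [(Finset.mem_filter.1 hπ).2]
  rw [Finset.sum_congr rfl h1, Finset.sum_const, stirlingFirst, nsmul_eq_mul]
  ring

-- insertion of the two copies of the maximal letter at gap `g`
def ins {n : ℕ} (g : Fin (2 * n + 1)) (σ : Fin (2 * n) → Fin n) :
    Fin (2 * (n + 1)) → Fin (n + 1) := fun p =>
  if h : (p : ℕ) < (g : ℕ) then (σ ⟨p, by omega⟩).castSucc
  else if h2 : (p : ℕ) < (g : ℕ) + 2 then Fin.last n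
  else (σ ⟨(p : ℕ) - 2, by omega⟩).castSucc

def insPos {n : ℕ} (g : Fin (2 * n + 1)) (i : Fin (2 * n)) : Fin (2 * (n + 1)) :=
  if _ : (i : ℕ) < (g : ℕ) then ⟨i, by omega⟩ else ⟨(i : ℕ) + 2, by omega⟩

namespace StirIns

variable {n : ℕ} {g : Fin (2 * n + 1)} {σ : Fin (2 * n) → Fin n}

lemma insPos_val (i : Fin (2 * n)) :
    ((insPos g i : Fin (2 * (n + 1))) : ℕ) = if (i : ℕ) < (g : ℕ) then (i : ℕ) else (i : ℕ) + 2 := by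
  unfold insPos; split <;> simp_all

lemma insPos_strictMono : StrictMono (insPos g (n := n)) := by
  intro i j hij
  have hij' : (i : ℕ) < (j : ℕ) := hij
  simp only [Fin.lt_def, insPos_val]
  split <;> split <;> omega

lemma insPos_lt_reflect {i j : Fin (2 * n)} (h : insPos g i < insPos g j) : i < j := by
  rcases lt_trichotomy i j with h1 | h1 | h1
  · exact h1
  · subst h1; exact absurd h (lt_irrefl _)
  · exact absurd (insPos_strictMono h1) (asymm h)

lemma ins_lt' (p : Fin (2 * (n + 1))) (h : (p : ℕ) < (g : ℕ)) :
    ins g σ p = (σ ⟨p, by omega⟩).castSucc := dif_pos h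

lemma ins_mid' (p : Fin (2 * (n + 1))) (h : ¬ (p : ℕ) < (g : ℕ)) (h2 : (p : ℕ) < (g : ℕ) + 2) :
    ins g σ p = Fin.last n := by
  unfold ins; rw [dif_neg h, dif_pos h2]

lemma ins_ge' (p : Fin (2 * (n + 1))) (h : (g : ℕ) + 2 ≤ (p : ℕ)) :
    ins g σ p = (σ ⟨(p : ℕ) - 2, by omega⟩).castSucc := by
  unfold ins; rw [dif_neg (by omega), dif_neg (by omega)]

lemma ins_insPos (i : Fin (2 * n)) : ins g σ (insPos g i) = (σ i).castSucc := by
  by_cases h : (i : ℕ) < (g : ℕ)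
  · rw [ins_lt' _ (by rw [insPos_val, if_pos h]; exact h)]
    congr 1
    exact Fin.ext (by simp [insPos_val, h])
  · rw [ins_ge' _ (by rw [insPos_val, if_neg h]; omega)]
    congr 1
    exact Fin.ext (by simp [insPos_val, h])

lemma insPos_val_ne_g (i : Fin (2 * n)) : ((insPos g i : Fin (2 * (n + 1))) : ℕ) ≠ (g : ℕ) := by
  rw [insPos_val]; split <;> omega

lemma insPos_val_ne_g1 (i : Fin (2 * n)) :
    ((insPos g i : Fin (2 * (n + 1))) : ℕ) ≠ (g : ℕ) + 1 := by
  rw [insPos_val]; split <;> omega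

lemma ins_eq_last_iff (p : Fin (2 * (n + 1))) :
    ins g σ p = Fin.last n ↔ (p : ℕ) = (g : ℕ) ∨ (p : ℕ) = (g : ℕ) + 1 := by
  by_cases h : (p : ℕ) < (g : ℕ)
  · rw [ins_lt' p h]
    exact ⟨fun hh => absurd hh (Fin.castSucc_lt_last _).ne, fun hh => by omega⟩
  · by_cases h2 : (p : ℕ) < (g : ℕ) + 2
    · rw [ins_mid' p h h2]
      exact ⟨fun _ => by omega, fun _ => rfl⟩
    · rw [ins_ge' p (by omega)]
      exact ⟨fun hh => absurd hh (Fin.castSucc_lt_last _).ne, fun hh => by omega⟩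

-- every position is either in the middle zone or an `insPos`
lemma ins_cases (p : Fin (2 * (n + 1))) :
    ((p : ℕ) = (g : ℕ) ∨ (p : ℕ) = (g : ℕ) + 1) ∨ ∃ i : Fin (2 * n), insPos g i = p := by
  by_cases h : (p : ℕ) < (g : ℕ)
  · refine Or.inr ⟨⟨p, by omega⟩, ?_⟩
    unfold insPos
    rw [dif_pos h]
  · by_cases h2 : (p : ℕ) < (g : ℕ) + 2
    · left; omega
    · refine Or.inr ⟨⟨(p : ℕ) - 2, by omega⟩, ?_⟩
      unfold insPos
      rw [dif_neg (by simp; omega)]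
      exact Fin.ext (by simp; omega)

end StirIns

namespace StirIns

variable {n : ℕ} {g : Fin (2 * n + 1)} {σ : Fin (2 * n) → Fin n}

lemma filter_ins_last :
    (univ.filter fun p => ins g σ p = Fin.last n)
      = {(⟨g, by omega⟩ : Fin (2 * (n + 1))), ⟨(g : ℕ) + 1, by omega⟩} := by
  ext p
  simp only [mem_filter, mem_univ, true_and, ins_eq_last_iff, mem_insert, mem_singleton]
  constructor
  · rintro (h | h)
    · exact Or.inl (Fin.ext h)
    · exact Or.inr (Fin.ext h)
  · rintro (rfl | rfl)
    · exact Or.inl rfl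
    · exact Or.inr rfl

lemma card_filter_ins_last :
    (univ.filter fun p => ins g σ p = Fin.last n).card = 2 := by
  rw [filter_ins_last]
  rw [Finset.card_insert_of_notMem (by simp [Fin.ext_iff]), Finset.card_singleton]

lemma card_filter_ins_castSucc (j : Fin n) :
    (univ.filter fun p => ins g σ p = j.castSucc).card
      = (univ.filter fun i => σ i = j).card := by
  symm
  refine Finset.card_bij (fun i _ => insPos g i) ?_ ?_ ?_
  · intro i hi
    rw [mem_filter] at hi ⊢
    exact ⟨mem_univ _, by rw [ins_insPos, hi.2]⟩
  · intro i _ j _ h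
    exact insPos_strictMono.injective h
  · intro p hp
    rw [mem_filter] at hp
    rcases ins_cases (g := g) p with hmid | ⟨i, hi⟩
    · exfalso
      have : ins g σ p = Fin.last n := (ins_eq_last_iff p).2 hmid
      rw [hp.2] at this
      exact (Fin.castSucc_lt_last j).ne this
    · refine ⟨i, ?_, hi⟩
      rw [mem_filter]
      refine ⟨mem_univ _, ?_⟩
      have := hp.2
      rw [← hi, ins_insPos] at this
      exact Fin.castSucc_injective n this

lemma isStirling_ins_iff : IsStirling (n + 1) (ins g σ) ↔ IsStirling n σ := by
  constructor
  · rintro ⟨hcnt, hord⟩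
    constructor
    · intro j
      rw [← card_filter_ins_castSucc (g := g) j]
      exact hcnt j.castSucc
    · intro i1 i2 i3 h12 h23 heq
      have := hord (insPos g i1) (insPos g i2) (insPos g i3)
        (insPos_strictMono h12) (insPos_strictMono h23)
        (by rw [ins_insPos, ins_insPos, heq])
      rw [ins_insPos, ins_insPos] at this
      exact Fin.castSucc_lt_castSucc_iff.1 this
  · rintro ⟨hcnt, hord⟩
    constructor
    · intro k
      induction k using Fin.lastCases with
      | last => exact card_filter_ins_last
      | cast j => rw [card_filter_ins_castSucc j]; exact hcnt j
    · intro p q r hpq hqr heq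
      by_cases hlast : ins g σ p = Fin.last n
      · exfalso
        have hp := (ins_eq_last_iff p).1 hlast
        have hr := (ins_eq_last_iff r).1 (heq ▸ hlast)
        have hpq' : (p : ℕ) < (q : ℕ) := hpq
        have hqr' : (q : ℕ) < (r : ℕ) := hqr
        omega
      · rcases ins_cases (g := g) p with hmid | ⟨ip, hip⟩
        · exact absurd ((ins_eq_last_iff p).2 hmid) hlast
        rcases ins_cases (g := g) r with hmid | ⟨ir, hir⟩
        · exact absurd ((ins_eq_last_iff r).2 hmid) (heq ▸ hlast)
        rcases ins_cases (g := g) q with hmid | ⟨iq, hiq⟩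
        · have hq : ins g σ q = Fin.last n := (ins_eq_last_iff q).2 hmid
          rw [hq, ← hip, ins_insPos]
          exact Fin.castSucc_lt_last _
        · have h1 : ip < iq := insPos_lt_reflect (g := g) (by rw [hip, hiq]; exact hpq)
          have h2 : iq < ir := insPos_lt_reflect (g := g) (by rw [hiq, hir]; exact hqr)
          have heq' : σ ip = σ ir := by
            have := heq
            rw [← hip, ← hir, ins_insPos, ins_insPos] at this
            exact Fin.castSucc_injective n this
          have := hord ip iq ir h1 h2 heq'
          rw [← hip, ← hiq, ins_insPos, ins_insPos]
          exact Fin.castSucc_lt_castSucc_iff.2 this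

end StirIns

namespace StirIns

variable {n : ℕ} {g : Fin (2 * n + 1)} {σ : Fin (2 * n) → Fin n}

lemma mem_evenFilter_ins_insPos (i : Fin (2 * n)) :
    insPos g i ∈ evenFilter (ins g σ) ↔ i ∈ evenFilter σ := by
  simp only [evenFilter, mem_filter, mem_univ, true_and]
  constructor
  · rintro ⟨hpar, hfirst⟩
    constructor
    · rw [insPos_val] at hpar; split at hpar <;> omega
    · intro j hj
      have h1 := hfirst (insPos g j) (insPos_strictMono hj)
      rw [ins_insPos, ins_insPos] at h1
      exact fun hc => h1 (by rw [hc])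
  · rintro ⟨hpar, hfirst⟩
    constructor
    · rw [insPos_val]; split <;> omega
    · intro q hq
      rcases ins_cases (g := g) q with hmid | ⟨j, hj⟩
      · rw [(ins_eq_last_iff q).2 hmid, ins_insPos]
        exact fun hc => (Fin.castSucc_lt_last _).ne hc.symm
      · rw [← hj, ins_insPos, ins_insPos]
        have hji : j < i := insPos_lt_reflect (g := g) (by rw [hj]; exact hq)
        exact fun hc => hfirst j hji (Fin.castSucc_injective n hc)

lemma evenFilter_ins :
    evenFilter (ins g σ)
      = if (g : ℕ) % 2 = 1
          then insert (⟨g, by omega⟩ : Fin (2 * (n + 1))) ((evenFilter σ).image (insPos g))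
          else (evenFilter σ).image (insPos g) := by
  have himg : ∀ p : Fin (2 * (n + 1)), p ∈ (evenFilter σ).image (insPos g)
      ↔ ∃ i ∈ evenFilter σ, insPos g i = p := fun p => Finset.mem_image
  ext p
  rcases ins_cases (g := g) p with hmid | ⟨i, hi⟩
  · rcases hmid with hg | hg1
    · -- p is the first position of the max letter
      have hp : p = (⟨g, by omega⟩ : Fin (2 * (n + 1))) := Fin.ext hg
      have hmem : p ∈ evenFilter (ins g σ) ↔ (g : ℕ) % 2 = 1 := by
        simp only [evenFilter, mem_filter, mem_univ, true_and, hg]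
        refine and_iff_left ?_
        intro q hq
        have hq' : (q : ℕ) < (g : ℕ) := by rw [← hg]; exact hq
        rw [ins_lt' q hq', (ins_eq_last_iff p).2 (Or.inl hg)]
        exact (Fin.castSucc_lt_last _).ne
      rw [hmem]
      have hnotimg : p ∉ (evenFilter σ).image (insPos g) := by
        rw [himg]
        rintro ⟨i, _, hip⟩
        exact insPos_val_ne_g i (by rw [hip, hg])
      split
      · next hodd => simp [hp, hodd]
      · next heven => simp [hnotimg, heven]
    · -- p is the second position of the max letter: never a first occurrence
      have hnot : p ∉ evenFilter (ins g σ) := by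
        simp only [evenFilter, mem_filter, mem_univ, true_and, not_and]
        intro _
        push_neg
        refine ⟨⟨g, by omega⟩, ?_, ?_⟩
        · rw [Fin.lt_def, Fin.val_mk]; omega
        · rw [(ins_eq_last_iff _).2 (Or.inl rfl), (ins_eq_last_iff p).2 (Or.inr hg1)]
      have hnotimg : p ∉ (evenFilter σ).image (insPos g) := by
        rw [himg]
        rintro ⟨i, _, hip⟩
        exact insPos_val_ne_g1 i (by rw [hip, hg1])
      have hne : p ≠ (⟨g, by omega⟩ : Fin (2 * (n + 1))) := by
        intro hc; simp only [Fin.ext_iff, Fin.val_mk] at hc; omega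
      simp only [iff_false_intro hnot, false_iff]
      split
      · simp [hnotimg, hne]
      · exact hnotimg
  · -- p is an inserted old position
    rw [← hi, mem_evenFilter_ins_insPos]
    have hmemimg : insPos g i ∈ (evenFilter σ).image (insPos g) ↔ i ∈ evenFilter σ := by
      rw [himg]
      constructor
      · rintro ⟨j, hj, hji⟩
        rwa [← insPos_strictMono.injective hji]
      · exact fun h => ⟨i, h, rfl⟩
    have hne : insPos g i ≠ (⟨g, by omega⟩ : Fin (2 * (n + 1))) := by
      intro hc; exact insPos_val_ne_g i (by rw [hc])
    split
    · rw [Finset.mem_insert, hmemimg]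
      simp [hne]
    · exact hmemimg.symm

lemma evenCount_ins :
    evenCount (ins g σ) = evenCount σ + if (g : ℕ) % 2 = 1 then 1 else 0 := by
  rw [evenCount, evenFilter_ins]
  have hcard : ((evenFilter σ).image (insPos g)).card = evenCount σ :=
    Finset.card_image_of_injective _ insPos_strictMono.injective
  split
  · rw [Finset.card_insert_of_notMem, hcard]
    rw [Finset.mem_image]
    rintro ⟨i, _, hip⟩
    exact insPos_val_ne_g i (by rw [hip])
  · rw [hcard, Nat.add_zero]

end StirIns

namespace StirIns

variable {n : ℕ}

lemma ins_lt_false {g g' : Fin (2 * n + 1)} {σ σ' : Fin (2 * n) → Fin n}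
    (heq : ins g σ = ins g' σ') (hlt : (g : ℕ) < (g' : ℕ)) : False := by
  set p : Fin (2 * (n + 1)) := ⟨g, by omega⟩ with hp
  have h1 : ins g σ p = Fin.last n := ins_mid' p (by simp [hp]) (by simp [hp])
  have h2 : ins g' σ' p = (σ' ⟨p, by simp [hp]; omega⟩).castSucc := ins_lt' p (by simp [hp]; omega)
  rw [heq, h2] at h1
  exact (Fin.castSucc_lt_last _).ne h1

lemma ins_inj {g g' : Fin (2 * n + 1)} {σ σ' : Fin (2 * n) → Fin n}
    (heq : ins g σ = ins g' σ') : g = g' ∧ σ = σ' := by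
  have hg : g = g' := by
    rcases lt_trichotomy (g : ℕ) (g' : ℕ) with h | h | h
    · exact absurd (ins_lt_false heq h) id
    · exact Fin.ext h
    · exact absurd (ins_lt_false heq.symm h) id
  subst hg
  refine ⟨rfl, funext fun i => ?_⟩
  have h1 : ins g σ (insPos g i) = ins g σ' (insPos g i) := by rw [heq]
  rw [ins_insPos, ins_insPos] at h1
  exact Fin.castSucc_injective n h1

lemma ins_surj_aux {τ : Fin (2 * (n + 1)) → Fin (n + 1)} (hτ : IsStirling (n + 1) τ)
    (a b : Fin (2 * (n + 1))) (hab : a < b)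
    (hF : univ.filter (fun p => τ p = Fin.last n) = {a, b}) :
    ∃ (g : Fin (2 * n + 1)) (σ : Fin (2 * n) → Fin n), ins g σ = τ := by
  have ha : τ a = Fin.last n := by
    have : a ∈ univ.filter (fun p => τ p = Fin.last n) := by rw [hF]; simp
    exact (mem_filter.1 this).2
  have hb : τ b = Fin.last n := by
    have : b ∈ univ.filter (fun p => τ p = Fin.last n) := by rw [hF]; simp
    exact (mem_filter.1 this).2
  have hab' : (a : ℕ) < (b : ℕ) := hab
  have hb1 : (b : ℕ) = (a : ℕ) + 1 := by
    rcases Nat.lt_or_ge ((a : ℕ) + 1) (b : ℕ) with h | h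
    · exfalso
      set q : Fin (2 * (n + 1)) := ⟨(a : ℕ) + 1, by have := b.isLt; omega⟩ with hq
      have h1 : a < q := by rw [Fin.lt_def]; simp [hq]
      have h2 : q < b := by rw [Fin.lt_def]; simp [hq]; omega
      have := hτ.2 a q b h1 h2 (by rw [ha, hb])
      rw [ha] at this
      exact absurd this (not_lt.2 (Fin.le_last _))
    · omega
  have hg2 : (a : ℕ) < 2 * n + 1 := by have := b.isLt; omega
  set g : Fin (2 * n + 1) := ⟨a, hg2⟩ with hgdef
  have hnotlast : ∀ i : Fin (2 * n), τ (insPos g i) ≠ Fin.last n := by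
    intro i hc
    have : insPos g i ∈ univ.filter (fun p => τ p = Fin.last n) := by
      rw [mem_filter]; exact ⟨mem_univ _, hc⟩
    rw [hF, mem_insert, mem_singleton] at this
    rcases this with h | h
    · exact insPos_val_ne_g i (by rw [h, hgdef])
    · exact insPos_val_ne_g1 i (by rw [h]; simp [hgdef]; omega)
  refine ⟨g, fun i => (τ (insPos g i)).castPred (hnotlast i), funext fun p => ?_⟩
  by_cases h : (p : ℕ) < (g : ℕ)
  · rw [ins_lt' p h, Fin.castSucc_castPred]
    congr 1
    apply Fin.ext
    rw [insPos_val, if_pos (show ((⟨(p : ℕ), by omega⟩ : Fin (2 * n)) : ℕ) < (g : ℕ) from h)]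
  · by_cases h2 : (p : ℕ) < (g : ℕ) + 2
    · rw [ins_mid' p h h2]
      have : (p : ℕ) = (a : ℕ) ∨ (p : ℕ) = (b : ℕ) := by
        simp only [hgdef, Fin.val_mk] at h h2
        omega
      rcases this with h3 | h3
      · rw [show p = a from Fin.ext h3, ha]
      · rw [show p = b from Fin.ext h3, hb]
    · simp only [hgdef, Fin.val_mk] at h h2
      rw [ins_ge' p (by simp only [hgdef, Fin.val_mk]; omega), Fin.castSucc_castPred]
      congr 1
      apply Fin.ext
      rw [insPos_val, if_neg (show ¬ ((⟨(p : ℕ) - 2, by omega⟩ : Fin (2 * n)) : ℕ) < (g : ℕ) by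
        simp only [hgdef, Fin.val_mk]; omega)]
      simp only [Fin.val_mk]
      omega

lemma ins_surj {τ : Fin (2 * (n + 1)) → Fin (n + 1)} (hτ : IsStirling (n + 1) τ) :
    ∃ (g : Fin (2 * n + 1)) (σ : Fin (2 * n) → Fin n), ins g σ = τ := by
  have hcard : (univ.filter (fun p => τ p = Fin.last n)).card = 2 := hτ.1 (Fin.last n)
  obtain ⟨a, b, hab, hF⟩ := Finset.card_eq_two.1 hcard
  rcases lt_or_gt_of_ne hab with h | h
  · exact ins_surj_aux hτ a b h hF
  · exact ins_surj_aux hτ b a h (by rw [hF, Finset.pair_comm])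

lemma evenCount_le (f : Fin (2 * n) → Fin n) : evenCount f ≤ n := by
  have hsub : evenFilter f ⊆ univ.filter (fun p : Fin (2 * n) => (p : ℕ) % 2 = 1) := by
    intro p hp
    rw [evenFilter, mem_filter] at hp
    rw [mem_filter]
    exact ⟨mem_univ _, hp.2.1⟩
  have hcard : (univ.filter (fun p : Fin (2 * n) => (p : ℕ) % 2 = 1)).card = n := by
    have h : (univ : Finset (Fin n)).card
        = (univ.filter (fun p : Fin (2 * n) => (p : ℕ) % 2 = 1)).card := by
      refine Finset.card_bij (fun (i : Fin n) _ => (⟨2 * (i : ℕ) + 1, by omega⟩ : Fin (2 * n))) ?_ ?_ ?_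
      · intro i _
        rw [mem_filter]
        exact ⟨mem_univ _, by simp [Nat.add_mul_mod_self_left]⟩
      · intro i _ j _ h
        rw [Fin.ext_iff] at h ⊢
        simp only [Fin.val_mk] at h
        omega
      · intro p hp
        rw [mem_filter] at hp
        refine ⟨⟨(p : ℕ) / 2, by have := p.isLt; omega⟩, mem_univ _, ?_⟩
        apply Fin.ext
        simp only [Fin.val_mk]
        omega
    rw [← h, Finset.card_univ, Fintype.card_fin]
  calc evenCount f ≤ (univ.filter (fun p : Fin (2 * n) => (p : ℕ) % 2 = 1)).card :=
        Finset.card_le_card hsub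
    _ = n := hcard

end StirIns

open StirIns

noncomputable def Lpoly (n : ℕ) : MvPolynomial (Fin 2) ℤ :=
  ∑ σ ∈ stirlingFinset n,
    MvPolynomial.X 0 ^ (n - evenCount σ) * MvPolynomial.X 1 ^ evenCount σ

lemma Lpoly_zero : Lpoly 0 = 1 := by
  have h1 : IsStirling 0 (fun p : Fin (2 * 0) => (p.elim0 : Fin 0)) :=
    ⟨fun k => k.elim0, fun p => p.elim0⟩
  have h2 : stirlingFinset 0 = {fun p : Fin (2 * 0) => (p.elim0 : Fin 0)} := by
    refine Finset.eq_singleton_iff_unique_mem.2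
      ⟨mem_filter.2 ⟨mem_univ _, h1⟩, fun x _ => Subsingleton.elim x _⟩
  rw [Lpoly, h2, Finset.sum_singleton]
  have h3 : evenCount (fun p : Fin (2 * 0) => (p.elim0 : Fin 0)) = 0 := by
    rw [evenCount, evenFilter]
    simp
  rw [h3]
  simp

lemma oddsum_range (A B : MvPolynomial (Fin 2) ℤ) (n : ℕ) :
    ∑ i ∈ Finset.range (2 * n + 1), (if i % 2 = 1 then B else A)
      = A + (n : MvPolynomial (Fin 2) ℤ) * (A + B) := by
  induction n with
  | zero => simp
  | succ m ih =>
    have h : 2 * (m + 1) + 1 = (2 * m + 1) + 1 + 1 := by ring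
    rw [h, Finset.sum_range_succ, Finset.sum_range_succ, ih,
      if_pos (by omega : (2 * m + 1) % 2 = 1), if_neg (by omega : ¬ (2 * m + 1 + 1) % 2 = 1)]
    push_cast
    ring

lemma Lpoly_succ (n : ℕ) :
    Lpoly (n + 1)
      = (MvPolynomial.X 0 + (n : MvPolynomial (Fin 2) ℤ)
          * (MvPolynomial.X 0 + MvPolynomial.X 1)) * Lpoly n := by
  classical
  have hbij : Lpoly (n + 1)
      = ∑ x ∈ (univ : Finset (Fin (2 * n + 1))) ×ˢ stirlingFinset n,
          MvPolynomial.X 0 ^ (n + 1 - evenCount (ins x.1 x.2))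
            * MvPolynomial.X 1 ^ evenCount (ins x.1 x.2) := by
    rw [Lpoly]
    refine (Finset.sum_bij (fun x _ => ins x.1 x.2) ?_ ?_ ?_ ?_).symm
    · intro x hx
      rw [Finset.mem_product] at hx
      exact mem_filter.2 ⟨mem_univ _, isStirling_ins_iff.2 (mem_filter.1 hx.2).2⟩
    · intro x hx y hy h
      obtain ⟨h1, h2⟩ := ins_inj h
      exact Prod.ext h1 h2
    · intro τ hτ
      obtain ⟨g, σ, hgs⟩ := ins_surj (mem_filter.1 hτ).2
      have hσ : IsStirling n σ := isStirling_ins_iff.1 (hgs ▸ (mem_filter.1 hτ).2)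
      exact ⟨(g, σ), Finset.mem_product.2 ⟨mem_univ _, mem_filter.2 ⟨mem_univ _, hσ⟩⟩, hgs⟩
    · intro x hx; rfl
  rw [hbij, Finset.sum_product]
  have hterm : ∀ (g : Fin (2 * n + 1)) (σ : Fin (2 * n) → Fin n),
      MvPolynomial.X 0 ^ (n + 1 - evenCount (ins g σ))
          * MvPolynomial.X 1 ^ evenCount (ins g σ)
        = (if (g : ℕ) % 2 = 1 then MvPolynomial.X 1 else (MvPolynomial.X 0 : MvPolynomial (Fin 2) ℤ))
          * (MvPolynomial.X 0 ^ (n - evenCount σ) * MvPolynomial.X 1 ^ evenCount σ) := by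
    intro g σ
    have hle := evenCount_le σ
    rw [evenCount_ins]
    by_cases hg : (g : ℕ) % 2 = 1
    · rw [if_pos hg, if_pos hg]
      have h : n + 1 - (evenCount σ + 1) = n - evenCount σ := by omega
      rw [h, pow_succ]
      ring
    · rw [if_neg hg, if_neg hg]
      have h : n + 1 - (evenCount σ + 0) = (n - evenCount σ) + 1 := by omega
      rw [h, pow_succ]
      ring
  calc ∑ g : Fin (2 * n + 1), ∑ σ ∈ stirlingFinset n,
        MvPolynomial.X 0 ^ (n + 1 - evenCount (ins g σ))
          * MvPolynomial.X 1 ^ evenCount (ins g σ)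
      = ∑ g : Fin (2 * n + 1),
          (if (g : ℕ) % 2 = 1 then MvPolynomial.X 1
            else (MvPolynomial.X 0 : MvPolynomial (Fin 2) ℤ)) * Lpoly n := by
        refine Finset.sum_congr rfl fun g _ => ?_
        rw [Lpoly, Finset.mul_sum]
        exact Finset.sum_congr rfl fun σ _ => hterm g σ
    _ = (MvPolynomial.X 0 + (n : MvPolynomial (Fin 2) ℤ)
          * (MvPolynomial.X 0 + MvPolynomial.X 1)) * Lpoly n := by
        rw [← Finset.sum_mul]
        congr 1
        rw [Fin.sum_univ_eq_sum_range
          (fun i => if i % 2 = 1 then MvPolynomial.X 1 else (MvPolynomial.X 0 : MvPolynomial (Fin 2) ℤ))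
          (2 * n + 1)]
        exact oddsum_range _ _ n

lemma Lpoly_eq_prod (n : ℕ) :
    Lpoly n = ∏ j ∈ Finset.range n,
      (MvPolynomial.X 0 + (j : MvPolynomial (Fin 2) ℤ)
        * (MvPolynomial.X 0 + MvPolynomial.X 1)) := by
  induction n with
  | zero => simp [Lpoly_zero]
  | succ m ih => rw [Lpoly_succ, ih, Finset.prod_range_succ]; ring

end Aux

/-- identity in ℤ[p,q] (variables X 0 = p, X 1 = q). -/
theorem stmt_4 (n : ℕ) (hn : 1 ≤ n) :
    ∑ σ ∈ stirlingFinset n,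
        (MvPolynomial.X 0 : MvPolynomial (Fin 2) ℤ) ^ (n - evenCount σ) *
          MvPolynomial.X 1 ^ evenCount σ
      = ∑ k ∈ Finset.range (n + 1),
          (stirlingFirst n k : MvPolynomial (Fin 2) ℤ) * MvPolynomial.X 0 ^ k *
            (MvPolynomial.X 0 + MvPolynomial.X 1) ^ (n - k) := by
  show Lpoly n = _
  rw [Lpoly_eq_prod, rhs_eq_Spoly, Spoly_eq_prod]
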